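/- Type preservation of the CPS transformation: if x₁:σ₁,…,xₙ:σₙ ⊢ M : τ is derivable in the call-by-value λ□-calculus, then x₁:⟦σ₁⟧,…,xₙ:⟦σₙ⟧ ⊢ ⟦M⟧ : (⟦τ⟧⊃R)⊃R is derivable in the call-by-name λ□-calculus. -/

import Mathlib

namespace LamBox

inductive Ty : Type
  | base : ℕ → Ty
  | arr : Ty → Ty → Ty
  | box : Ty → Ty
  deriving DecidableEq

inductive Tm : Type
  | const : ℕ → Tm
  | var : ℕ → Tm
  | lam : ℕ → Tm → Tm
  | app : Tm → Tm → Tm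
  | box : List ℕ → List Tm → Tm → Tm

mutual
  def fv : Tm → Finset ℕ
    | .const _ => ∅
    | .var x => {x}
    | .lam x M => fv M \ {x}
    | .app M N => fv M ∪ fv N
    | .box _ Ns _ => fvList Ns
  def fvList : List Tm → Finset ℕ
    | [] => ∅
    | N :: Ns => fv N ∪ fvList Ns
end

mutual
  def subst (x : ℕ) (P : Tm) : Tm → Tm
    | .const c => .const c
    | .var y => if y = x then P else .var y
    | .lam y M => if y = x then .lam y M else .lam y (subst x P M)
    | .app M N => .app (subst x P M) (subst x P N)
    | .box xs Ns M => .box xs (substList x P Ns) M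
  def substList (x : ℕ) (P : Tm) : List Tm → List Tm
    | [] => []
    | N :: Ns => subst x P N :: substList x P Ns
end

abbrev Ctx := List (ℕ × Ty)

inductive Lookup : Ctx → ℕ → Ty → Prop
  | here {Γ x τ} : Lookup ((x, τ) :: Γ) x τ
  | there {Γ x τ y σ} : x ≠ y → Lookup Γ x τ → Lookup ((y, σ) :: Γ) x τ

inductive HasType (ct : ℕ → Ty) : Ctx → Tm → Ty → Prop
  | const {Γ c} : HasType ct Γ (.const c) (ct c)
  | var {Γ x τ} : Lookup Γ x τ → HasType ct Γ (.var x) τ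
  | lam {Γ x σ M τ} : HasType ct ((x, σ) :: Γ) M τ →
      HasType ct Γ (.lam x M) (.arr σ τ)
  | app {Γ M N σ τ} : HasType ct Γ M (.arr σ τ) → HasType ct Γ N σ →
      HasType ct Γ (.app M N) τ
  | box {Γ} {xs : List ℕ} {σs : List Ty} {Ns : List Tm} {M τ} :
      xs.length = σs.length →
      HasType ct ((xs.zip σs).reverse) M τ →
      Ns.length = σs.length →
      (∀ i (hN : i < Ns.length) (hσ : i < σs.length),
        HasType ct Γ (Ns.get ⟨i, hN⟩) (.box (σs.get ⟨i, hσ⟩))) →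
      HasType ct Γ (.box xs Ns M) (.box τ)

inductive StepN : Tm → Tm → Prop
  | beta {x M N} : StepN (.app (.lam x M) N) (subst x N M)
  | eta {x M} : x ∉ fv M → StepN (.lam x (.app M (.var x))) M
  | idBox {x M} : StepN (.box [x] [M] (.var x)) M
  | betaBox {ws zs : List ℕ} {x : ℕ} {Ps Qs Ls : List Tm} {ys : List ℕ} {N M : Tm} :
      ws.length = Ps.length →
      StepN (.box (ws ++ x :: zs) (Ps ++ (Tm.box ys Ls N) :: Qs) M)
            (.box (ws ++ ys ++ zs) (Ps ++ Ls ++ Qs) (subst x N M))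
  | appL {M M' N} : StepN M M' → StepN (.app M N) (.app M' N)
  | appR {M N N'} : StepN N N' → StepN (.app M N) (.app M N')
  | lam {x M M'} : StepN M M' → StepN (.lam x M) (.lam x M')
  | boxArg {xs : List ℕ} {Ps Qs : List Tm} {N N' M} : StepN N N' →
      StepN (.box xs (Ps ++ N :: Qs) M) (.box xs (Ps ++ N' :: Qs) M)
  | boxBody {xs : List ℕ} {Ns : List Tm} {M M'} : StepN M M' →
      StepN (.box xs Ns M) (.box xs Ns M')


/-- Values of the call-by-value λ□-calculus. -/
inductive IsValue : Tm → Prop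
  | const (c) : IsValue (.const c)
  | var (x) : IsValue (.var x)
  | lam (x M) : IsValue (.lam x M)
  | box {xs : List ℕ} {Vs : List Tm} {M} : (∀ V ∈ Vs, IsValue V) →
      IsValue (.box xs Vs M)

/-- Simple evaluation contexts `C ::= −M | V− | box x⃗ be V⃗,−,M⃗ in M`. -/
inductive SCtx : Type
  | appL : Tm → SCtx
  | appR : Tm → SCtx
  | box : List ℕ → List Tm → List Tm → Tm → SCtx

/-- Filling the hole of a simple evaluation context. -/
def fillS : SCtx → Tm → Tm
  | .appL M, h => .app h M
  | .appR V, h => .app V h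
  | .box xs Vs Ms M, h => .box xs (Vs ++ h :: Ms) M

/-- Well-formedness of a simple evaluation context (the parts required to be
values are values). -/
def GoodS : SCtx → Prop
  | .appL _ => True
  | .appR V => IsValue V
  | .box _ Vs _ _ => ∀ V ∈ Vs, IsValue V

/-- Free variables of a simple evaluation context. -/
def fvS : SCtx → Finset ℕ
  | .appL M => fv M
  | .appR V => fv V
  | .box _ Vs Ms _ => fvList Vs ∪ fvList Ms

/-- Evaluation contexts `E ::= − | C[E]`, as lists of simple contexts. -/
abbrev ECtx := List SCtx

/-- Filling the hole of an evaluation context. -/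
def fillE : ECtx → Tm → Tm
  | [], h => h
  | C :: E, h => fillS C (fillE E h)

def GoodE (E : ECtx) : Prop := ∀ C ∈ E, GoodS C

/-- The call-by-value reduction `→v` (compatible closure). -/
inductive StepV : Tm → Tm → Prop
  | idArr {x M} : StepV (.app (.lam x (.var x)) M) M
  | betaV {x M V} : IsValue V → StepV (.app (.lam x M) V) (subst x V M)
  | etaV {x V} : IsValue V → x ∉ fv V → StepV (.lam x (.app V (.var x))) V
  | lift {C x M N} : GoodS C → x ∉ fvS C →
      StepV (fillS C (.app (.lam x M) N)) (.app (.lam x (fillS C M)) N)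
  | flat {C y M x} : GoodS C → (∀ V, C ≠ .appR V) → x ∉ fvS C → x ≠ y →
      StepV (fillS C (.app (.var y) M))
            (.app (.lam x (fillS C (.var x))) (.app (.var y) M))
  | betaOmega {E : ECtx} {x y M} : GoodE E → x ∉ fv (fillE E (.var y)) →
      StepV (.app (.lam x (fillE E (.app (.var y) (.var x)))) M)
            (fillE E (.app (.var y) M))
  | idBox {x M} : StepV (.box [x] [M] (.var x)) M
  | betaBoxV {ws zs : List ℕ} {x : ℕ} {Ws Ps Ns : List Tm} {ys : List ℕ} {V M} :
      ws.length = Ws.length → (∀ W ∈ Ws, IsValue W) → IsValue V →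
      StepV (.box (ws ++ x :: zs) (Ws ++ (Tm.box ys Ns V) :: Ps) M)
            (.box (ws ++ ys ++ zs) (Ws ++ Ns ++ Ps) (subst x V M))
  | appL {M M' N} : StepV M M' → StepV (.app M N) (.app M' N)
  | appR {M N N'} : StepV N N' → StepV (.app M N) (.app M N')
  | lam {x M M'} : StepV M M' → StepV (.lam x M) (.lam x M')
  | boxArg {xs : List ℕ} {Ps Qs : List Tm} {N N' M} : StepV N N' →
      StepV (.box xs (Ps ++ N :: Qs) M) (.box xs (Ps ++ N' :: Qs) M)
  | boxBody {xs : List ℕ} {Ns : List Tm} {M M'} : StepV M M' →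
      StepV (.box xs Ns M) (.box xs Ns M')

/-- The restriction of the call-by-value calculus: every box subterm has the
form `box x⃗ be M⃗ in V` with `V` a value. -/
inductive Restricted : Tm → Prop
  | const (c) : Restricted (.const c)
  | var (x) : Restricted (.var x)
  | lam {x M} : Restricted M → Restricted (.lam x M)
  | app {M N} : Restricted M → Restricted N → Restricted (.app M N)
  | box {xs : List ℕ} {Ns : List Tm} {M} : (∀ N ∈ Ns, Restricted N) →
      Restricted M → IsValue M → Restricted (.box xs Ns M)

/-- A variable not occurring in the given finite set (all `fresh s + j` avoid `s`). -/
def fresh (s : Finset ℕ) : ℕ := (s.sup id) + 1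

/-- `appCont [N₁,…,Nₙ] [x₁,…,xₙ] B = N₁(λx₁.⋯ Nₙ(λxₙ. B)⋯)`. -/
def appCont : List Tm → List ℕ → Tm → Tm
  | [], _, body => body
  | _ :: _, [], body => body
  | N :: Ns, x :: xs, body => .app N (.lam x (appCont Ns xs body))

/-- The CPS transformation on types: `⟦σ⊃τ⟧ = (⟦τ⟧⊃R)⊃⟦σ⟧⊃R`, `⟦□σ⟧ = □⟦σ⟧`,
where `R` is the fixed type constant `base r`. -/
def cpsTy (r : ℕ) : Ty → Ty
  | .base q => .base q
  | .arr σ τ => .arr (.arr (cpsTy r τ) (.base r)) (.arr (cpsTy r σ) (.base r))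
  | .box σ => .box (cpsTy r σ)

mutual
  /-- `Ψ`, the CPS transformation on values:  `Ψ(λx.M) = λk.λx.⟦M⟧k`,
  `Ψ(box x⃗ be U⃗ in V) = box x⃗ be Ψ(U⃗) in Ψ(V)`.  (On non-values it is junk.) -/
  def cpsV : Tm → Tm
    | .const c => .const c
    | .var x => .var x
    | .lam x M =>
        let M' := cps M
        let k := fresh (fv M' ∪ {x})
        .lam k (.lam x (.app M' (.var k)))
    | .box xs Us V => .box xs (cpsVList Us) (cpsV V)
    | .app M N => .app M N
  def cpsVList : List Tm → List Tm
    | [] => []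
    | U :: Us => cpsV U :: cpsVList Us
  /-- The CPS transformation `⟦−⟧` on terms:  `⟦V⟧ = λk.kΨ(V)`,
  `⟦MN⟧ = λk.⟦M⟧(λy.⟦N⟧(yk))`, and
  `⟦box x⃗ be M⃗ in V⟧ = λk.⟦M₁⟧(λy₁.⋯⟦Mₙ⟧(λyₙ. k(box x⃗ be y⃗ in Ψ(V)))⋯)`. -/
  def cps : Tm → Tm
    | .const c =>
        let k := fresh ∅
        .lam k (.app (.var k) (.const c))
    | .var x =>
        let k := fresh {x}
        .lam k (.app (.var k) (.var x))
    | .lam x M =>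
        let M' := cps M
        let b := fresh (fv M' ∪ {x})
        .lam b (.app (.var b) (.lam (b + 1) (.lam x (.app M' (.var (b + 1))))))
    | .app M N =>
        let M' := cps M
        let N' := cps N
        let b := fresh (fv M' ∪ fv N')
        .lam b (.app M' (.lam (b + 1) (.app N' (.app (.var (b + 1)) (.var b)))))
    | .box xs Ms V =>
        let Ms' := cpsList Ms
        let V' := cpsV V
        let b := fresh (fvList Ms' ∪ fv V' ∪ xs.toFinset)
        let ys := (List.range Ms'.length).map fun i => b + 1 + i
        .lam b (appCont Ms' ys (.app (.var b) (.box xs (ys.map Tm.var) V')))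
  def cpsList : List Tm → List Tm
    | [] => []
    | M :: Ms => cps M :: cpsList Ms
end

/-! ### Auxiliary lemmas for the type preservation proof -/

theorem fresh_add_not_mem (s : Finset ℕ) (j : ℕ) : fresh s + j ∉ s := by
  intro h
  have := Finset.le_sup (f := id) h
  simp only [id] at this
  unfold fresh at this
  omega

theorem mem_fvList_of_mem {N : Tm} {Ns : List Tm} (h : N ∈ Ns) : fv N ⊆ fvList Ns := by
  induction Ns with
  | nil => simp at h
  | cons P Ps ih =>
    rcases List.mem_cons.1 h with rfl | h
    · simp [fvList, Finset.subset_union_left]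
    · exact (ih h).trans (by simp [fvList, Finset.subset_union_right])

theorem ht_mono {ct : ℕ → Ty} {Γ : Ctx} {M : Tm} {τ : Ty} (h : HasType ct Γ M τ) :
    ∀ Γ' : Ctx, (∀ x τ', x ∈ fv M → Lookup Γ x τ' → Lookup Γ' x τ') →
    HasType ct Γ' M τ := by
  induction h with
  | const => intro Γ' _; exact .const
  | var hl =>
    intro Γ' hm
    exact .var (hm _ _ (by simp [fv]) hl)
  | lam _ ih =>
    intro Γ' hm
    refine .lam (ih _ ?_)
    intro y τ' hy hl
    cases hl with
    | here => exact .here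
    | there hne hl =>
      exact .there hne (hm _ _ (by simp [fv, hy, hne]) hl)
  | app _ _ ihM ihN =>
    intro Γ' hm
    exact .app (ihM _ fun x τ' hx => hm x τ' (by simp [fv, hx]))
      (ihN _ fun x τ' hx => hm x τ' (by simp [fv, hx]))
  | box hlen hbody hNs hty ihbody ihty =>
    intro Γ' hm
    refine .box hlen hbody hNs ?_
    intro i hN hσ
    refine ihty i hN hσ _ ?_
    intro x τ' hx hl
    exact hm x τ' (by
      show x ∈ fv (.box _ _ _)
      simp only [fv]
      exact mem_fvList_of_mem (List.get_mem _ _) hx) hl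

theorem lookup_weaken {Γ : Ctx} {x : ℕ} {τ : Ty} (Δ : Ctx)
    (hd : ∀ p ∈ Δ, x ≠ p.1) (h : Lookup Γ x τ) : Lookup (Δ ++ Γ) x τ := by
  induction Δ with
  | nil => exact h
  | cons p Δ ih =>
    exact .there (hd p (by simp)) (ih fun q hq => hd q (by simp [hq]))

theorem weaken {ct : ℕ → Ty} {Γ : Ctx} {M : Tm} {τ : Ty} (Δ : Ctx)
    (hd : ∀ p ∈ Δ, p.1 ∉ fv M) (h : HasType ct Γ M τ) : HasType ct (Δ ++ Γ) M τ :=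
  ht_mono h _ fun x _ hx hl =>
    lookup_weaken Δ (fun p hp hxp => hd p hp (hxp ▸ hx)) hl

theorem insert_mid {ct : ℕ → Ty} {Γ : Ctx} {M : Tm} {τ : Ty} {x : ℕ} {σ : Ty} (Δ : Ctx)
    (hd : ∀ p ∈ Δ, p.1 ∉ fv M) (h : HasType ct ((x, σ) :: Γ) M τ) :
    HasType ct ((x, σ) :: (Δ ++ Γ)) M τ := by
  refine ht_mono h _ ?_
  intro y τ' hy hl
  cases hl with
  | here => exact .here
  | there hne hl =>
    exact .there hne (lookup_weaken Δ (fun p hp hxp => hd p hp (hxp ▸ hy)) hl)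

theorem lookup_map {Γ : Ctx} {x : ℕ} {τ : Ty} (r : ℕ) (h : Lookup Γ x τ) :
    Lookup (Γ.map fun e => (e.1, cpsTy r e.2)) x (cpsTy r τ) := by
  induction h with
  | here => exact .here
  | there hne _ ih => exact .there hne ih

theorem lookup_of_mem_nodup {Δ : Ctx} {x : ℕ} {τ : Ty} (Γ : Ctx)
    (hnd : (Δ.map Prod.fst).Nodup) (hm : (x, τ) ∈ Δ) : Lookup (Δ ++ Γ) x τ := by
  induction Δ with
  | nil => simp at hm
  | cons p Δ ih =>
    simp only [List.map_cons, List.nodup_cons] at hnd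
    rcases List.mem_cons.1 hm with rfl | hm
    · exact .here
    · refine .there ?_ (ih hnd.2 hm)
      intro hx
      exact hnd.1 (hx ▸ List.mem_map_of_mem (f := Prod.fst) hm)

theorem cpsList_length (Ms : List Tm) : (cpsList Ms).length = Ms.length := by
  induction Ms with
  | nil => rfl
  | cons M Ms ih => simp [cpsList, ih]

theorem cpsVList_length (Ms : List Tm) : (cpsVList Ms).length = Ms.length := by
  induction Ms with
  | nil => rfl
  | cons M Ms ih => simp [cpsVList, ih]

theorem cpsList_get (Ms : List Tm) (i : ℕ) (h : i < (cpsList Ms).length)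
    (h' : i < Ms.length) : (cpsList Ms).get ⟨i, h⟩ = cps (Ms.get ⟨i, h'⟩) := by
  induction Ms generalizing i with
  | nil => simp at h'
  | cons M Ms ih =>
    cases i with
    | zero => rfl
    | succ i => exact ih i (by simpa [cpsList] using h) (by simpa using h')

theorem cpsVList_get (Ms : List Tm) (i : ℕ) (h : i < (cpsVList Ms).length)
    (h' : i < Ms.length) : (cpsVList Ms).get ⟨i, h⟩ = cpsV (Ms.get ⟨i, h'⟩) := by
  induction Ms generalizing i with
  | nil => simp at h'
  | cons M Ms ih =>
    cases i with
    | zero => rfl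
    | succ i => exact ih i (by simpa [cpsVList] using h) (by simpa using h')

theorem appCont_ht {ct : ℕ → Ty} {R : Ty} {Γ : Ctx} :
    ∀ (Ns : List Tm) (ys : List ℕ) (σs : List Ty) (Δ : Ctx) (body : Tm),
    Ns.length = σs.length → ys.length = σs.length →
    (∀ i (hi : i < Ns.length) (hσ : i < σs.length),
      HasType ct Γ (Ns.get ⟨i, hi⟩)
        (.arr (.arr (σs.get ⟨i, hσ⟩) R) R)) →
    (∀ p ∈ Δ, ∀ N ∈ Ns, p.1 ∉ fv N) →
    (∀ y ∈ ys, ∀ N ∈ Ns, y ∉ fv N) →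
    HasType ct ((ys.zip σs).reverse ++ Δ ++ Γ) body R →
    HasType ct (Δ ++ Γ) (appCont Ns ys body) R := by
  intro Ns
  induction Ns with
  | nil =>
    intro ys σs Δ body hlen _ _ _ _ hbody
    have : σs = [] := List.length_eq_zero_iff.1 hlen.symm
    subst this
    simpa [appCont, List.zip] using hbody
  | cons N Ns ih =>
    intro ys σs Δ body hlen hylen hty hΔ hys hbody
    cases σs with
    | nil => simp at hlen
    | cons σ σs =>
      cases ys with
      | nil => simp at hylen
      | cons y ys =>
        show HasType ct (Δ ++ Γ) (.app N (.lam y (appCont Ns ys body))) R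
        refine .app (σ := .arr σ R) (τ := R) ?_ ?_
        · exact weaken Δ (fun p hp => hΔ p hp N (by simp)) (hty 0 (by simp) (by simp))
        · refine .lam ?_
          have : ((y, σ) :: (Δ ++ Γ)) = ((y, σ) :: Δ) ++ Γ := by simp
          rw [this]
          refine ih ys σs ((y, σ) :: Δ) body (by simpa using hlen) (by simpa using hylen)
            (fun i hi hσ => hty (i + 1) (by simpa using hi) (by simpa using hσ)) ?_ ?_ ?_
          · intro p hp N' hN'
            rcases List.mem_cons.1 hp with rfl | hp
            · exact hys y (by simp) N' (by simp [hN'])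
            · exact hΔ p hp N' (by simp [hN'])
          · exact fun y' hy' N' hN' => hys y' (by simp [hy']) N' (by simp [hN'])
          · have : ((y :: ys).zip (σ :: σs)).reverse ++ Δ ++ Γ
                = (ys.zip σs).reverse ++ ((y, σ) :: Δ) ++ Γ := by
              simp [List.zip_cons_cons]
            rw [← this]
            exact hbody

theorem box_cps_ht {ct : ℕ → Ty} {R : Ty} {Γ : Ctx} (xs : List ℕ) (σs : List Ty)
    (Ms' : List Tm) (V' : Tm) (τ' : Ty) (b : ℕ)
    (hlen : xs.length = σs.length) (hMs : Ms'.length = σs.length)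
    (hty : ∀ i (hi : i < Ms'.length) (hσ : i < σs.length),
      HasType ct Γ (Ms'.get ⟨i, hi⟩) (.arr (.arr (.box (σs.get ⟨i, hσ⟩)) R) R))
    (hV : HasType ct ((xs.zip σs).reverse) V' τ')
    (hb : ∀ j, b + j ∉ fvList Ms') :
    HasType ct Γ
      (.lam b (appCont Ms' ((List.range Ms'.length).map fun i => b + 1 + i)
        (.app (.var b) (.box xs
          ((((List.range Ms'.length).map fun i => b + 1 + i)).map Tm.var) V'))))
      (.arr (.arr (.box τ') R) R) := by
  set ys : List ℕ := (List.range Ms'.length).map fun i => b + 1 + i with hys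
  have hylen : ys.length = σs.length := by simp [hys, hMs]
  have hymem : ∀ y ∈ ys, ∃ i, y = b + 1 + i := by
    intro y hy
    obtain ⟨i, _, rfl⟩ := List.mem_map.1 hy
    exact ⟨i, rfl⟩
  apply HasType.lam
  refine appCont_ht Ms' ys (σs.map Ty.box) [(b, .arr (.box τ') R)] _
    (by simpa using hMs) (by simpa using hylen) ?_ ?_ ?_ ?_
  · intro i hi hσ
    have := hty i hi (by simpa using hσ)
    simpa [List.get_eq_getElem, List.getElem_map] using this
  · intro p hp N hN
    simp only [List.mem_cons, List.not_mem_nil, or_false] at hp; subst hp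
    exact fun hx => hb 0 (by simpa using mem_fvList_of_mem hN hx)
  · intro y hy N hN
    obtain ⟨i, rfl⟩ := hymem y hy
    exact fun hx => hb (1 + i)
      (by rw [show b + (1 + i) = b + 1 + i by omega]; exact mem_fvList_of_mem hN hx)
  · refine HasType.app (σ := .box τ') ?_ ?_
    · refine HasType.var ?_
      rw [List.append_assoc]
      refine lookup_weaken _ ?_ .here
      intro p hp
      have h1 : p.1 ∈ ys := by
        have := List.of_mem_zip (List.mem_reverse.1 hp)
        exact this.1
      obtain ⟨i, hi⟩ := hymem _ h1
      omega
    · refine HasType.box (σs := σs) hlen hV (by simp [hylen]) ?_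
      intro i hN hσ
      have hiy : i < ys.length := by simpa using hN
      have hget : (ys.map Tm.var).get ⟨i, hN⟩ = Tm.var (b + 1 + i) := by
        simp [hys, List.get_eq_getElem, List.getElem_map, List.getElem_range]
      rw [hget]
      refine HasType.var ?_
      rw [List.append_assoc]
      refine lookup_of_mem_nodup _ ?_ ?_
      · rw [List.map_reverse]
        refine List.nodup_reverse.2 ?_
        rw [List.map_fst_zip (l₁ := ys) (l₂ := σs.map Ty.box) (by simpa using le_of_eq hylen)]
        exact List.Nodup.map (fun a a' h => by omega) (List.nodup_range (n := _))
      · refine List.mem_reverse.2 ?_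
        have hz : (ys.zip (σs.map Ty.box)).get
              ⟨i, by simp [List.length_zip, hylen]; omega⟩
            = (b + 1 + i, .box (σs.get ⟨i, hσ⟩)) := by
          simp [List.get_eq_getElem, List.getElem_zip, hys, List.getElem_map,
            List.getElem_range]
        rw [← hz]
        exact List.get_mem _ _

theorem cps_aux (ct : ℕ → Ty) (r : ℕ) {Γ : Ctx} {M : Tm} {τ : Ty}
    (hM : HasType ct Γ M τ) :
    (Restricted M →
      HasType (fun c => cpsTy r (ct c)) (Γ.map fun e => (e.1, cpsTy r e.2))
        (cps M) (.arr (.arr (cpsTy r τ) (.base r)) (.base r))) ∧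
    (Restricted M → IsValue M →
      HasType (fun c => cpsTy r (ct c)) (Γ.map fun e => (e.1, cpsTy r e.2))
        (cpsV M) (cpsTy r τ)) := by
  set ct' : ℕ → Ty := fun c => cpsTy r (ct c) with hct'
  set R : Ty := .base r with hR
  induction hM with
  | @const Γ c =>
    refine ⟨fun _ => ?_, fun _ _ => ?_⟩
    · exact .lam (.app (.var .here) (HasType.const (ct := ct')))
    · exact HasType.const (ct := ct')
  | @var Γ x τ hl =>
    have hk : fresh ({x} : Finset ℕ) ≠ x := by
      have := fresh_add_not_mem {x} 0
      simp at this; omega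
    refine ⟨fun _ => ?_, fun _ _ => .var (lookup_map r hl)⟩
    exact .lam (.app (.var .here) (.var (.there hk.symm (lookup_map r hl))))
  | @lam Γ x σ M τ hM ih =>
    have hb0 : fresh (fv (cps M) ∪ {x}) ∉ fv (cps M) ∪ {x} := by
      have := fresh_add_not_mem (fv (cps M) ∪ {x}) 0; simpa using this
    have hb1 : fresh (fv (cps M) ∪ {x}) + 1 ∉ fv (cps M) ∪ {x} :=
      fresh_add_not_mem (fv (cps M) ∪ {x}) 1
    simp only [Finset.mem_union, Finset.mem_singleton, not_or] at hb0 hb1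
    constructor
    · intro hres
      have hresM : Restricted M := by cases hres with | lam h => exact h
      have hM' := ih.1 hresM
      refine .lam (.app (.var .here) (.lam (.lam (.app ?_ (.var (.there hb1.2 .here))))))
      exact insert_mid [(_, _), (_, _)] (by intro p hp; simp only [List.mem_cons, List.not_mem_nil, or_false] at hp; rcases hp with rfl | rfl <;> simp_all) hM'
    · intro hres _
      have hresM : Restricted M := by cases hres with | lam h => exact h
      have hM' := ih.1 hresM
      refine .lam (.lam (.app ?_ (.var (.there hb0.2 .here))))
      exact insert_mid [(_, _)] (by intro p hp; simp only [List.mem_cons, List.not_mem_nil, or_false] at hp; subst hp; simp_all) hM'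
  | @app Γ M N σ τ hM hN ihM ihN =>
    refine ⟨fun hres => ?_, fun _ hv => by cases hv⟩
    have hresM : Restricted M := by cases hres with | app h _ => exact h
    have hresN : Restricted N := by cases hres with | app _ h => exact h
    have hM' := ihM.1 hresM
    have hN' := ihN.1 hresN
    have hb0 := fresh_add_not_mem (fv (cps M) ∪ fv (cps N)) 0
    have hb1 := fresh_add_not_mem (fv (cps M) ∪ fv (cps N)) 1
    simp only [Finset.mem_union, not_or, Nat.add_zero] at hb0 hb1
    apply HasType.lam
    refine HasType.app (σ := .arr (cpsTy r (.arr σ τ)) R) ?_ ?_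
    · exact weaken [(_, _)] (by intro p hp; simp only [List.mem_cons, List.not_mem_nil, or_false] at hp; subst hp; simp_all) hM'
    · apply HasType.lam
      refine HasType.app (σ := .arr (cpsTy r σ) R) ?_ ?_
      · exact weaken [(_, _), (_, _)] (by intro p hp; simp only [List.mem_cons, List.not_mem_nil, or_false] at hp; rcases hp with rfl | rfl <;> simp_all) hN'
      · exact HasType.app (σ := .arr (cpsTy r τ) R) (.var .here)
          (.var (.there (by omega) .here))
  | @box Γ xs σs Ns M τ hlen hbody hNs hty ihbody ihty =>
    have hctx : (((xs.zip σs).reverse).map fun e => (e.1, cpsTy r e.2))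
        = (xs.zip (σs.map (cpsTy r))).reverse := by
      rw [List.map_reverse, List.zip_map_right]
      rfl
    have hres2 : ∀ (_ : Restricted (.box xs Ns M)),
        (∀ N ∈ Ns, Restricted N) ∧ Restricted M ∧ IsValue M := by
      intro hres; cases hres with | box h1 h2 h3 => exact ⟨h1, h2, h3⟩
    constructor
    · intro hres
      obtain ⟨hrN, hrM, hvM⟩ := hres2 hres
      show HasType ct' _
        (.lam (fresh (fvList (cpsList Ns) ∪ fv (cpsV M) ∪ xs.toFinset))
          (appCont (cpsList Ns)
            ((List.range (cpsList Ns).length).map fun i =>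
              fresh (fvList (cpsList Ns) ∪ fv (cpsV M) ∪ xs.toFinset) + 1 + i)
            (.app (.var (fresh (fvList (cpsList Ns) ∪ fv (cpsV M) ∪ xs.toFinset)))
              (.box xs
                ((((List.range (cpsList Ns).length).map fun i =>
                  fresh (fvList (cpsList Ns) ∪ fv (cpsV M) ∪ xs.toFinset) + 1 + i)).map
                  Tm.var)
                (cpsV M)))))
        (.arr (.arr (.box (cpsTy r τ)) R) R)
      refine box_cps_ht xs (σs.map (cpsTy r)) (cpsList Ns) (cpsV M) (cpsTy r τ) _
        (by simpa using hlen) (by simp [cpsList_length, hNs]) ?_ ?_ ?_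
      · intro i hi hσ
        have hi' : i < Ns.length := by simpa [cpsList_length] using hi
        rw [cpsList_get Ns i hi hi']
        have := (ihty i hi' (by simpa using hσ)).1 (hrN _ (List.get_mem _ _))
        simpa [List.get_eq_getElem, List.getElem_map, cpsTy] using this
      · rw [← hctx]
        exact ihbody.2 hrM hvM
      · intro j
        intro hx
        have := fresh_add_not_mem (fvList (cpsList Ns) ∪ fv (cpsV M) ∪ xs.toFinset) j
        simp only [Finset.mem_union, not_or] at this
        exact this.1.1 hx
    · intro hres hv
      obtain ⟨hrN, hrM, hvM⟩ := hres2 hres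
      have hvN : ∀ N ∈ Ns, IsValue N := by cases hv with | box h => exact h
      show HasType ct' _ (.box xs (cpsVList Ns) (cpsV M)) (.box (cpsTy r τ))
      refine HasType.box (σs := σs.map (cpsTy r)) (by simpa using hlen) ?_
        (by simp [cpsVList_length, hNs]) ?_
      · rw [← hctx]
        exact ihbody.2 hrM hvM
      · intro i hN hσ
        have hi' : i < Ns.length := by simpa [cpsVList_length] using hN
        rw [cpsVList_get Ns i hN hi']
        have := (ihty i hi' (by simpa using hσ)).2 (hrN _ (List.get_mem _ _))
          (hvN _ (List.get_mem _ _))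
        simpa [List.get_eq_getElem, List.getElem_map, cpsTy] using this

/-- **Type preservation of the CPS transformation**: if
`x₁:σ₁,…,xₙ:σₙ ⊢ M : τ` is derivable in the call-by-value λ□-calculus
(terms restricted so box bodies are values), then
`x₁:⟦σ₁⟧,…,xₙ:⟦σₙ⟧ ⊢ ⟦M⟧ : (⟦τ⟧⊃R)⊃R` is derivable in the call-by-name
λ□-calculus. -/
theorem cps_type_preservation (ct : ℕ → Ty) (r : ℕ) (Γ : Ctx) (M : Tm) (τ : Ty)
    (hres : Restricted M) (hM : HasType ct Γ M τ) :
    HasType (fun c => cpsTy r (ct c)) (Γ.map fun e => (e.1, cpsTy r e.2))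
      (cps M) (.arr (.arr (cpsTy r τ) (.base r)) (.base r)) := by
  exact (cps_aux ct r hM).1 hres

end LamBox
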